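/- For every natural number m with m ≥ 2, the sum over j from 1 to m−1 of cos(2πj/m)/sin²(πj/m) equals (m² − 6m + 5)/3. -/

import Mathlib

open Real Finset
open Complex


private lemma lemA (x : ℂ) (n : ℕ) :
    (x - 1) ^ 2 * ∑ k ∈ range n, (k : ℂ) * x ^ k
      = ((n : ℂ) - 1) * x ^ (n + 1) - n * x ^ n + x := by
  induction n with
  | zero => simp
  | succ n ih =>
    rw [Finset.sum_range_succ, mul_add, ih]; push_cast; ring

private lemma lemB (x : ℂ) (n : ℕ) :
    (x - 1) ^ 3 * ∑ k ∈ range n, (k : ℂ) ^ 2 * x ^ k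
      = ((n : ℂ) - 1) ^ 2 * x ^ (n + 2) + (-2 * n ^ 2 + 2 * n + 1) * x ^ (n + 1)
        + (n : ℂ) ^ 2 * x ^ n - x ^ 2 - x := by
  induction n with
  | zero => simp
  | succ n ih =>
    rw [Finset.sum_range_succ, mul_add, ih]; push_cast; ring

private lemma lemL (m : ℕ) (x : ℂ) (hx : x ^ m = 1) :
    (x - 1) ^ 3 * ∑ k ∈ range m, (k : ℂ) * ((m : ℂ) - k) * x ^ k
      = 2 * m * x * (x - 1) := by
  have hsplit : ∑ k ∈ range m, (k : ℂ) * ((m : ℂ) - k) * x ^ k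
      = (m : ℂ) * ∑ k ∈ range m, (k : ℂ) * x ^ k - ∑ k ∈ range m, (k : ℂ) ^ 2 * x ^ k := by
    rw [Finset.mul_sum, ← Finset.sum_sub_distrib]
    exact Finset.sum_congr rfl fun k _ => by ring
  have hA := lemA x m
  have hB := lemB x m
  have h1 : x ^ (m + 1) = x := by rw [pow_succ, hx, one_mul]
  have h2 : x ^ (m + 2) = x ^ 2 := by rw [pow_add, hx, one_mul]
  rw [hsplit, hx] at *
  rw [h1] at hA
  rw [h1, h2, hx] at hB
  linear_combination (m : ℂ) * (x - 1) * hA - hB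

private lemma key (m j : ℕ) (hj1 : 1 ≤ j) (hjm : j < m) :
    (∑ k ∈ range m, (k : ℝ) * ((m : ℝ) - k) * Real.cos (2 * π * j * k / m))
        * Real.sin (π * j / m) ^ 2 = -(m : ℝ) / 2 := by
  have hm0 : (m : ℝ) ≠ 0 := Nat.cast_ne_zero.mpr (by omega)
  have hmC : (m : ℂ) ≠ 0 := by exact_mod_cast Complex.ofReal_ne_zero.mpr hm0
  have hj0 : (0:ℝ) < j := by exact_mod_cast hj1
  set w : ℝ := 2 * π * j / m with hw
  set θ : ℝ := π * j / m with hθ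
  set ζ : ℂ := Complex.exp (w * I) with hζ
  set η : ℂ := Complex.exp (θ * I) with hη
  have hζ0 : ζ ≠ 0 := Complex.exp_ne_zero _
  have hη0 : η ≠ 0 := Complex.exp_ne_zero _
  have hζm : ζ ^ m = 1 := by
    rw [hζ, ← Complex.exp_nat_mul]
    have : (m : ℂ) * (↑w * I) = (j : ℤ) * (2 * ↑π * I) := by
      push_cast [hw]
      field_simp
    rw [this, Complex.exp_int_mul_two_pi_mul_I]
  have hζ1 : ζ ≠ 1 := by
    intro h
    have hre : Real.cos w = 1 := by
      have := congrArg Complex.re h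
      rwa [hζ, Complex.exp_ofReal_mul_I_re] at this
    have hw0 : 0 < w := by
      rw [hw]; positivity
    have hw2 : w < 2 * π := by
      rw [hw, div_lt_iff₀ (by exact_mod_cast (show 0 < m by omega))]
      have : (j : ℝ) < m := by exact_mod_cast hjm
      nlinarith [Real.pi_pos]
    have := (Real.cos_eq_one_iff_of_lt_of_lt (by linarith) hw2).mp hre
    linarith
  have hζsub : ζ - 1 ≠ 0 := sub_ne_zero.mpr hζ1
  set ξ : ℂ := ζ⁻¹ with hξ
  have hξm : ξ ^ m = 1 := by rw [hξ, inv_pow, hζm, inv_one]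
  have hξ1 : ξ ≠ 1 := by rwa [hξ, ne_eq, inv_eq_one]
  have hξsub : ξ - 1 ≠ 0 := sub_ne_zero.mpr hξ1
  have hSζ : (ζ - 1) ^ 2 * ∑ k ∈ range m, (k : ℂ) * ((m : ℂ) - k) * ζ ^ k = 2 * m * ζ :=
    mul_left_cancel₀ hζsub (by linear_combination lemL m ζ hζm)
  have hSξ : (ξ - 1) ^ 2 * ∑ k ∈ range m, (k : ℂ) * ((m : ℂ) - k) * ξ ^ k = 2 * m * ξ :=
    mul_left_cancel₀ hξsub (by linear_combination lemL m ξ hξm)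
  have hinv : ζ * ξ = 1 := mul_inv_cancel₀ hζ0
  -- sin squared
  have hη2 : η ^ 2 = ζ := by
    rw [hη, hζ, ← Complex.exp_nat_mul]
    congr 1
    push_cast [hw, hθ]
    ring
  have hsin : (Real.sin θ : ℂ) ^ 2 * (4 * ζ) = -(ζ - 1) ^ 2 := by
    rw [Complex.ofReal_sin, Complex.sin, ← hη]
    have hexpneg : Complex.exp (-(θ:ℂ) * I) = η⁻¹ := by
      rw [hη, ← Complex.exp_neg]
      congr 1
      ring
    rw [show Complex.exp (-↑θ * I) = η⁻¹ from hexpneg, ← hη2]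
    field_simp
    ring_nf
    simp [Complex.I_sq]
    ring
  -- cosine values
  have hcosk : ∀ k : ℕ, (Real.cos (2 * π * j * k / m) : ℂ) * 2 = ζ ^ k + ξ ^ k := by
    intro k
    have h1 : ζ ^ k = Complex.exp ((2 * π * j * k / m : ℝ) * I) := by
      rw [hζ, ← Complex.exp_nat_mul]
      congr 1
      push_cast [hw]
      ring
    have h2 : ξ ^ k = Complex.exp (-((2 * π * j * k / m : ℝ) * I)) := by
      rw [hξ, inv_pow, h1, ← Complex.exp_neg]
    rw [Complex.ofReal_cos, Complex.cos, h1, h2]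
    ring
  -- put together
  apply Complex.ofReal_injective
  push_cast
  have hsum : (∑ k ∈ range m, (k:ℂ) * ((m:ℂ) - k) * (Real.cos (2 * π * j * k / m) : ℂ)) * 2
      = (∑ k ∈ range m, (k : ℂ) * ((m : ℂ) - k) * ζ ^ k)
        + ∑ k ∈ range m, (k : ℂ) * ((m : ℂ) - k) * ξ ^ k := by
    rw [Finset.sum_mul, ← Finset.sum_add_distrib]
    refine Finset.sum_congr rfl fun k _ => ?_
    linear_combination (k : ℂ) * ((m : ℂ) - k) * hcosk k
  have hSxi' : (ζ - 1) ^ 2 * ∑ k ∈ range m, (k : ℂ) * ((m : ℂ) - k) * ξ ^ k = 2 * m * ζ := by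
    linear_combination ζ ^ 2 * hSξ +
      ((2 * ζ - 1 - ζ * ξ) * (∑ k ∈ range m, (k : ℂ) * ((m : ℂ) - k) * ξ ^ k) + 2 * m * ζ) * hinv
  push_cast at hsum hsin
  apply mul_left_cancel₀ (show (8 : ℂ) * ζ ≠ 0 from mul_ne_zero (by norm_num) hζ0)
  linear_combination (4 * ζ * Complex.sin (θ:ℂ) ^ 2) * hsum
    + ((∑ k ∈ range m, (k : ℂ) * ((m : ℂ) - k) * ζ ^ k)
        + ∑ k ∈ range m, (k : ℂ) * ((m : ℂ) - k) * ξ ^ k) * hsin - hSζ - hSxi'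


lemma innerCos (m k : ℕ) (hk1 : 1 ≤ k) (hkm : k < m) :
    ∑ j ∈ Finset.Icc 1 (m - 1), Real.cos (2 * π * j * k / m) = -1 := by
  have hm0 : (m : ℝ) ≠ 0 := Nat.cast_ne_zero.mpr (by omega)
  have hmC : (m : ℂ) ≠ 0 := Nat.cast_ne_zero.mpr (by omega)
  set w : ℝ := 2 * π * k / m with hw
  set ζ : ℂ := Complex.exp (w * I) with hζ
  have hζm : ζ ^ m = 1 := by
    rw [hζ, ← Complex.exp_nat_mul]
    have : (m : ℂ) * (↑w * I) = (k : ℤ) * (2 * ↑π * I) := by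
      push_cast [hw]; field_simp
    rw [this, Complex.exp_int_mul_two_pi_mul_I]
  have hζ1 : ζ ≠ 1 := by
    intro h
    have hre : Real.cos w = 1 := by
      have := congrArg Complex.re h
      rwa [hζ, Complex.exp_ofReal_mul_I_re] at this
    have hk0 : (0:ℝ) < k := by exact_mod_cast hk1
    have hw0 : 0 < w := by rw [hw]; positivity
    have hw2 : w < 2 * π := by
      rw [hw, div_lt_iff₀ (by exact_mod_cast (show 0 < m by omega))]
      have : (k : ℝ) < m := by exact_mod_cast hkm
      nlinarith [Real.pi_pos]
    have := (Real.cos_eq_one_iff_of_lt_of_lt (by linarith) hw2).mp hre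
    linarith
  have hgeom : ∑ j ∈ range m, ζ ^ j = 0 := by
    rw [geom_sum_eq hζ1, hζm]; simp
  have hre : ∑ j ∈ range m, Real.cos (2 * π * j * k / m) = 0 := by
    have hcongr : ∑ j ∈ range m, Real.cos (2 * π * j * k / m)
        = ∑ j ∈ range m, (ζ ^ j).re := by
      refine Finset.sum_congr rfl fun j _ => ?_
      rw [hζ, ← Complex.exp_nat_mul]
      have : (j : ℂ) * (↑w * I) = ((2 * π * j * k / m : ℝ) : ℂ) * I := by
        push_cast [hw]; ring
      rw [this, Complex.exp_ofReal_mul_I_re]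
    rw [hcongr, ← Complex.re_sum, hgeom, Complex.zero_re]
  have hIcc : Finset.Icc 1 (m - 1) = Finset.Ico 1 m := by
    rw [← Finset.Ico_add_one_right_eq_Icc]; congr 1; omega
  rw [Finset.range_eq_Ico, Finset.sum_eq_sum_Ico_succ_bot (show 0 < m by omega)] at hre
  rw [hIcc]
  have h0 : Real.cos (2 * π * (0:ℕ) * k / m) = 1 := by norm_num
  rw [h0] at hre
  linarith

lemma sumId (n : ℕ) : ∑ k ∈ range n, (k : ℝ) = n * (n - 1) / 2 := by
  induction n with
  | zero => simp
  | succ n ih => rw [Finset.sum_range_succ, ih]; push_cast; ring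

lemma sumSq (n : ℕ) : ∑ k ∈ range n, (k : ℝ) ^ 2 = n * (n - 1) * (2 * n - 1) / 6 := by
  induction n with
  | zero => simp
  | succ n ih => rw [Finset.sum_range_succ, ih]; push_cast; ring

lemma sumC (n : ℕ) : ∑ k ∈ range n, (k : ℝ) * ((n : ℝ) - k)
    = (n : ℝ) * (n - 1) * (n + 1) / 6 := by
  have h : ∑ k ∈ range n, (k : ℝ) * ((n : ℝ) - k)
      = (n : ℝ) * (∑ k ∈ range n, (k : ℝ)) - ∑ k ∈ range n, (k : ℝ) ^ 2 := by
    rw [Finset.mul_sum, ← Finset.sum_sub_distrib]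
    exact Finset.sum_congr rfl fun k _ => by ring
  rw [h, sumId, sumSq]; ring

/-- Lemma 3.4 (second identity): for every integer `m ≥ 2`,
`∑_{j=1}^{m-1} cos(2πj/m) / sin²(πj/m) = (m² − 6m + 5)/3`. -/
theorem sum_cos_csc_sq (m : ℕ) (hm : 2 ≤ m) :
    ∑ j ∈ Finset.Icc 1 (m - 1), Real.cos (2 * π * j / m) / (Real.sin (π * j / m)) ^ 2
      = ((m : ℝ) ^ 2 - 6 * m + 5) / 3 := by
  have hm0 : (m : ℝ) ≠ 0 := Nat.cast_ne_zero.mpr (by omega)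
  have hterm : ∀ j ∈ Finset.Icc 1 (m - 1),
      Real.cos (2 * π * j / m) / (Real.sin (π * j / m)) ^ 2
        = -(2 / m) * ∑ k ∈ range m, (k : ℝ) * ((m : ℝ) - k) * Real.cos (2 * π * j * k / m)
          - 2 := by
    intro j hj
    obtain ⟨hj1, hj2⟩ := Finset.mem_Icc.mp hj
    have hjm : j < m := by omega
    have hj0 : (0:ℝ) < j := by exact_mod_cast hj1
    have hjmR : (j : ℝ) < m := by exact_mod_cast hjm
    have hsinpos : 0 < Real.sin (π * j / m) := by
      apply Real.sin_pos_of_pos_of_lt_pi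
      · positivity
      · rw [div_lt_iff₀ (by positivity)]
        nlinarith [Real.pi_pos]
    have hs2 : Real.sin (π * j / m) ^ 2 ≠ 0 := by positivity
    have hkey := key m j hj1 hjm
    have hcos2 : Real.cos (2 * π * j / m) = 1 - 2 * Real.sin (π * j / m) ^ 2 := by
      rw [show 2 * π * (j:ℝ) / m = 2 * (π * j / m) by ring, Real.cos_two_mul]
      nlinarith [Real.sin_sq_add_cos_sq (π * j / m)]
    rw [div_eq_iff hs2]
    linear_combination hcos2 + (2 / (m:ℝ)) * hkey - mul_inv_cancel₀ hm0
  rw [Finset.sum_congr rfl hterm, Finset.sum_sub_distrib, Finset.sum_const,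
    ← Finset.mul_sum, Finset.sum_comm]
  have hswap : ∑ k ∈ range m, ∑ j ∈ Finset.Icc 1 (m - 1),
      (k : ℝ) * ((m : ℝ) - k) * Real.cos (2 * π * j * k / m)
      = ∑ k ∈ range m, -((k : ℝ) * ((m : ℝ) - k)) := by
    refine Finset.sum_congr rfl fun k hk => ?_
    rcases Nat.eq_zero_or_pos k with hk0 | hk1
    · subst hk0; simp
    · rw [← Finset.mul_sum, innerCos m k hk1 (Finset.mem_range.mp hk)]
      ring
  rw [hswap, Finset.sum_neg_distrib, sumC, nsmul_eq_mul]
  have hcard : ((Finset.Icc 1 (m - 1)).card : ℝ) = (m : ℝ) - 1 := by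
    rw [Nat.card_Icc]
    have : m - 1 + 1 - 1 = m - 1 := by omega
    rw [this, Nat.cast_sub (by omega), Nat.cast_one]
  rw [hcard]
  field_simp
  ring
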